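/- Let r > 0 and σ ∈ ℝ, and let (g_n)_{n∈ℤ} be the family of ℂ²-valued functions defined in the context. Then the family is pairwise orthogonal in L²(ℝ,ℂ²): for all n, m ∈ ℤ with n ≠ m, ∫_ℝ ⟨g_n(y), g_m(y)⟩_{ℂ²} dy = 0. -/

import Mathlib

noncomputable section

/-- The k-th physicists' Hermite polynomial, `H_k(y) = (−1)^k e^{y²} (d/dy)^k e^{−y²}`. -/
def physHermite (k : ℕ) (y : ℝ) : ℝ :=
  (-1 : ℝ) ^ k * Real.exp (y ^ 2) * iteratedDeriv k (fun t => Real.exp (-t ^ 2)) y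

/-- The k-th Hermite function `𝔥_k(y) = (2^k k! √π)^{−1/2} H_k(y) e^{−y²/2}`. -/
def hermiteFun (k : ℕ) (y : ℝ) : ℝ :=
  (Real.sqrt (2 ^ k * (Nat.factorial k : ℝ) * Real.sqrt Real.pi))⁻¹ *
    physHermite k y * Real.exp (-(y ^ 2) / 2)

/-- The eigenvalues `λ_n`: `λ₀ = −σ`, `λ_n = sgn(n)√(σ² + 2|n|r²)` for `n ≠ 0`. -/
def lamE (r σ : ℝ) (n : ℤ) : ℝ :=
  if n = 0 then -σ else ((Int.sign n : ℤ) : ℝ) * Real.sqrt (σ ^ 2 + 2 * |(n : ℝ)| * r ^ 2)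

/-- The normalization constants `α_n = (2r)^{−1/2}√(1 + σ/λ_n)` for `n ≠ 0`. -/
def alphaE (r σ : ℝ) (n : ℤ) : ℝ :=
  (Real.sqrt (2 * r))⁻¹ * Real.sqrt (1 + σ / lamE r σ n)

/-- The eigenfunctions `g_n : ℝ → ℂ²`. -/
def gE (r σ : ℝ) (n : ℤ) (y : ℝ) : ℂ × ℂ :=
  if n = 0 then
    (0, (((Real.sqrt r)⁻¹ * hermiteFun 0 (r * y) : ℝ) : ℂ))
  else
    (((alphaE r σ n * hermiteFun (n.natAbs - 1) (r * y) : ℝ) : ℂ),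
     ((alphaE r σ n * (Real.sqrt (2 * |(n : ℝ)|) * r / (lamE r σ n + σ)) *
        hermiteFun n.natAbs (r * y) : ℝ) : ℂ))

/-- The operator `T_{r,σ} = !![σ, y r² + i D_y; y r² − i D_y, −σ]` acting on
differentiable `w : ℝ → ℂ²`. -/
def TOp (r σ : ℝ) (w : ℝ → ℂ × ℂ) (y : ℝ) : ℂ × ℂ :=
  ((σ : ℂ) * (w y).1 + ((y * r ^ 2 : ℝ) : ℂ) * (w y).2 + deriv (fun t => (w t).2) y,
   ((y * r ^ 2 : ℝ) : ℂ) * (w y).1 - deriv (fun t => (w t).1) y - (σ : ℂ) * (w y).2)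


open Polynomial MeasureTheory Filter

namespace Stmt16Aux

def Hp : ℕ → Polynomial ℝ
  | 0 => 1
  | k + 1 => 2 * (X * Hp k) - derivative (Hp k)

lemma Hp_succ (k : ℕ) : Hp (k + 1) = 2 * (X * Hp k) - derivative (Hp k) := rfl

lemma Hp_derivative : ∀ k : ℕ, derivative (Hp (k + 1)) = C (2 * ((k : ℝ) + 1)) * Hp k := by
  intro k
  induction k with
  | zero =>
    simp [Hp, map_ofNat]
  | succ n ih =>
    have h1 : derivative (Hp n) = 2 * (X * Hp n) - Hp (n + 1) := by rw [Hp_succ]; ring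
    rw [Hp_succ (n + 1)]
    simp only [derivative_sub, derivative_mul, derivative_X, derivative_C, derivative_ofNat, ih,
      h1]
    push_cast
    rw [show C (2 * ((n : ℝ) + 1 + 1)) = C (2 * ((n : ℝ) + 1)) + C 2 by rw [← C_add]; ring_nf,
      show ((2 : ℝ[X])) = C 2 by rw [map_ofNat]]
    ring

end Stmt16Aux

namespace Stmt16Aux
open Real Asymptotics

lemma hasDerivAt_gauss (y : ℝ) :
    HasDerivAt (fun t : ℝ => Real.exp (-t ^ 2)) (-2 * y * Real.exp (-y ^ 2)) y := by
  have h := ((hasDerivAt_pow 2 y).neg).exp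
  simpa using h.congr_deriv (by simp only [Pi.neg_apply]; ring)

lemma hasDerivAt_poly_gauss (p : Polynomial ℝ) (y : ℝ) :
    HasDerivAt (fun t : ℝ => p.eval t * Real.exp (-t ^ 2))
      ((derivative p - 2 * (X * p)).eval y * Real.exp (-y ^ 2)) y := by
  have h := (p.hasDerivAt y).mul (hasDerivAt_gauss y)
  refine h.congr_deriv ?_
  simp [eval_mul, eval_sub]
  ring

lemma iteratedDeriv_gauss (k : ℕ) : ∀ y : ℝ,
    iteratedDeriv k (fun t : ℝ => Real.exp (-t ^ 2)) y
      = (-1) ^ k * (Hp k).eval y * Real.exp (-y ^ 2) := by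
  induction k with
  | zero => intro y; simp [Hp]
  | succ n ih =>
    intro y
    rw [iteratedDeriv_succ]
    have hf : (iteratedDeriv n (fun t : ℝ => Real.exp (-t ^ 2)))
        = fun y => (-1) ^ n * ((Hp n).eval y * Real.exp (-y ^ 2)) := by
      funext z; rw [ih z]; ring
    rw [hf]
    have h := ((hasDerivAt_poly_gauss (Hp n) y).const_mul ((-1 : ℝ) ^ n)).deriv
    rw [h]
    have hp : derivative (Hp n) - 2 * (X * Hp n) = -(Hp (n + 1)) := by rw [Hp_succ]; ring
    rw [hp]
    simp [pow_succ]
    ring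

lemma physHermite_eq (k : ℕ) (y : ℝ) : physHermite k y = (Hp k).eval y := by
  unfold physHermite
  rw [iteratedDeriv_gauss k y]
  have h1 : Real.exp (y ^ 2) * Real.exp (-y ^ 2) = 1 := by
    rw [← Real.exp_add]; simp
  have h2 : ((-1 : ℝ) ^ k) * ((-1 : ℝ) ^ k) = 1 := by
    rw [← mul_pow]; norm_num
  calc (-1 : ℝ) ^ k * Real.exp (y ^ 2) * ((-1) ^ k * (Hp k).eval y * Real.exp (-y ^ 2))
      = (((-1 : ℝ) ^ k) * ((-1 : ℝ) ^ k)) * (Real.exp (y ^ 2) * Real.exp (-y ^ 2))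
        * (Hp k).eval y := by ring
    _ = (Hp k).eval y := by rw [h1, h2]; ring

end Stmt16Aux

namespace Stmt16Aux
open Real Asymptotics Set

lemma poly_gauss_isBigO (p : Polynomial ℝ) :
    (fun x : ℝ => p.eval x * Real.exp (-x ^ 2)) =O[atTop] fun x => Real.exp (-x) := by
  rw [isBigO_iff]
  refine ⟨1, ?_⟩
  have h1 : Tendsto (fun x : ℝ => |p.eval x / Real.exp x|) atTop (nhds 0) := by
    simpa using p.tendsto_div_exp_atTop.abs
  have h2 : ∀ᶠ x : ℝ in atTop, |p.eval x / Real.exp x| ≤ 1 :=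
    h1.eventually_le_const one_pos
  filter_upwards [h2, eventually_ge_atTop (2 : ℝ)] with x hx hx2
  have hle : Real.exp (x - x ^ 2) ≤ Real.exp (-x) := Real.exp_le_exp.mpr (by nlinarith)
  have heq : |p.eval x * Real.exp (-x ^ 2)| = |p.eval x / Real.exp x| * Real.exp (x - x ^ 2) := by
    rw [abs_mul, abs_div, abs_of_pos (Real.exp_pos x), abs_of_pos (Real.exp_pos _),
      Real.exp_sub]
    field_simp
    rw [mul_assoc, ← Real.exp_add]
    simp
  calc ‖p.eval x * Real.exp (-x ^ 2)‖ = |p.eval x / Real.exp x| * Real.exp (x - x ^ 2) := heq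
    _ ≤ 1 * Real.exp (-x) := by
        apply mul_le_mul hx hle (Real.exp_pos _).le zero_le_one
    _ = 1 * ‖Real.exp (-x)‖ := by rw [Real.norm_eq_abs, abs_of_pos (Real.exp_pos _)]

lemma poly_gauss_tendsto_atTop (p : Polynomial ℝ) :
    Tendsto (fun x : ℝ => p.eval x * Real.exp (-x ^ 2)) atTop (nhds 0) :=
  (poly_gauss_isBigO p).trans_tendsto Real.tendsto_exp_neg_atTop_nhds_zero

lemma poly_gauss_tendsto_atBot (p : Polynomial ℝ) :
    Tendsto (fun x : ℝ => p.eval x * Real.exp (-x ^ 2)) atBot (nhds 0) := by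
  have h := (poly_gauss_tendsto_atTop (p.comp (-X))).comp tendsto_neg_atBot_atTop
  refine h.congr fun x => ?_
  simp [eval_comp]

lemma poly_gauss_integrableOn_Ici (p : Polynomial ℝ) :
    IntegrableOn (fun x : ℝ => p.eval x * Real.exp (-x ^ 2)) (Ici 0) := by
  have hO : (fun x : ℝ => p.eval x * Real.exp (-x ^ 2)) =O[atTop]
      fun x => Real.exp (-1 * x) := by
    have he : (fun x : ℝ => Real.exp (-1 * x)) = fun x : ℝ => Real.exp (-x) := by
      funext x; ring_nf
    rw [he]; exact poly_gauss_isBigO p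
  have hc : Continuous (fun x : ℝ => p.eval x * Real.exp (-x ^ 2)) :=
    p.continuous.mul (Real.continuous_exp.comp (continuous_pow 2).neg)
  rw [integrableOn_Ici_iff_integrableOn_Ioi]
  exact integrable_of_isBigO_exp_neg one_pos hc.continuousOn hO

lemma integrableOn_Iic_comp_neg {f : ℝ → ℝ} (h : IntegrableOn (fun x => f (-x)) (Ici (0:ℝ))) :
    IntegrableOn f (Iic (0:ℝ)) := by
  have A : MeasurableEmbedding fun x : ℝ => -x :=
    (Homeomorph.neg ℝ).isClosedEmbedding.measurableEmbedding
  have hpre : (fun x : ℝ => -x) ⁻¹' (Iic (0:ℝ)) = Ici (0:ℝ) := by ext x; simp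
  have hmap : volume.restrict (Iic (0:ℝ))
      = Measure.map (fun x : ℝ => -x) (volume.restrict (Ici (0:ℝ))) := by
    calc volume.restrict (Iic (0:ℝ))
        = (Measure.map (fun x : ℝ => -x) volume).restrict (Iic 0) := by
          rw [Measure.map_neg_eq_self]
      _ = Measure.map (fun x : ℝ => -x) (volume.restrict ((fun x : ℝ => -x) ⁻¹' Iic 0)) :=
          Measure.restrict_map A.measurable measurableSet_Iic
      _ = _ := by rw [hpre]
  rw [IntegrableOn, hmap, A.integrable_map_iff]
  exact h

lemma poly_gauss_integrable (p : Polynomial ℝ) :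
    Integrable (fun x : ℝ => p.eval x * Real.exp (-x ^ 2)) := by
  have hIic : IntegrableOn (fun x : ℝ => p.eval x * Real.exp (-x ^ 2)) (Iic 0) := by
    apply integrableOn_Iic_comp_neg
    have h := poly_gauss_integrableOn_Ici (p.comp (-X))
    refine h.congr_fun (fun x _ => ?_) measurableSet_Ici
    simp [eval_comp]
  have := hIic.union (poly_gauss_integrableOn_Ici p)
  rwa [Iic_union_Ici, integrableOn_univ] at this

end Stmt16Aux

namespace Stmt16Aux
open Real Asymptotics Set

lemma integral_poly_gauss_deriv_zero (p : Polynomial ℝ) :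
    ∫ y : ℝ, (derivative p - 2 * (X * p)).eval y * Real.exp (-y ^ 2) = 0 := by
  have hint : Integrable (fun y : ℝ => (derivative p - 2 * (X * p)).eval y * Real.exp (-y ^ 2)) :=
    poly_gauss_integrable _
  have hIic : ∫ y in Iic (0:ℝ), (derivative p - 2 * (X * p)).eval y * Real.exp (-y ^ 2)
      = p.eval 0 * Real.exp (-(0:ℝ) ^ 2) - 0 :=
    integral_Iic_of_hasDerivAt_of_tendsto' (fun x _ => hasDerivAt_poly_gauss p x)
      hint.integrableOn (poly_gauss_tendsto_atBot p)
  have hIoi : ∫ y in Ioi (0:ℝ), (derivative p - 2 * (X * p)).eval y * Real.exp (-y ^ 2)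
      = 0 - p.eval 0 * Real.exp (-(0:ℝ) ^ 2) :=
    integral_Ioi_of_hasDerivAt_of_tendsto' (fun x _ => hasDerivAt_poly_gauss p x)
      hint.integrableOn (poly_gauss_tendsto_atTop p)
  rw [← intervalIntegral.integral_Iic_add_Ioi (b := (0:ℝ)) hint.integrableOn hint.integrableOn, hIic, hIoi]
  ring

def Jint (j k : ℕ) : ℝ := ∫ y : ℝ, (Hp j).eval y * (Hp k).eval y * Real.exp (-y ^ 2)

lemma integrable_mul_gauss (p q : Polynomial ℝ) :
    Integrable (fun y : ℝ => p.eval y * q.eval y * Real.exp (-y ^ 2)) := by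
  have h := poly_gauss_integrable (p * q)
  simpa [eval_mul] using h

lemma J_zero_succ (k : ℕ) : Jint 0 (k + 1) = 0 := by
  have h0 := integral_poly_gauss_deriv_zero (Hp k)
  have hpoly : derivative (Hp k) - 2 * (X * Hp k) = -(Hp (k + 1)) := by rw [Hp_succ]; ring
  rw [hpoly] at h0
  have : Jint 0 (k + 1) = -∫ y : ℝ, (-(Hp (k+1))).eval y * Real.exp (-y ^ 2) := by
    unfold Jint
    rw [← integral_neg]
    congr 1
    funext y
    simp [Hp]
    ring
  rw [this, h0, neg_zero]

lemma J_succ_succ (j k : ℕ) : Jint (j + 1) (k + 1) = (2 * ((j:ℝ) + 1)) * Jint j k := by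
  have h0 := integral_poly_gauss_deriv_zero (Hp (j + 1) * Hp k)
  have hpoly : derivative (Hp (j + 1) * Hp k) - 2 * (X * (Hp (j + 1) * Hp k))
      = C (2 * ((j:ℝ) + 1)) * (Hp j * Hp k) - Hp (j + 1) * Hp (k + 1) := by
    rw [derivative_mul, Hp_derivative j, Hp_succ k]
    ring
  rw [hpoly] at h0
  have hfun : ∀ y : ℝ, (C (2 * ((j:ℝ) + 1)) * (Hp j * Hp k) - Hp (j + 1) * Hp (k + 1)).eval y
        * Real.exp (-y ^ 2)
      = (2 * ((j:ℝ) + 1)) * ((Hp j).eval y * (Hp k).eval y * Real.exp (-y ^ 2))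
        - (Hp (j+1)).eval y * (Hp (k+1)).eval y * Real.exp (-y ^ 2) := by
    intro y; simp; ring
  simp_rw [hfun] at h0
  rw [integral_sub ((integrable_mul_gauss (Hp j) (Hp k)).const_mul _)
    (integrable_mul_gauss (Hp (j+1)) (Hp (k+1))), integral_const_mul] at h0
  unfold Jint
  linarith

lemma J_symm (j k : ℕ) : Jint j k = Jint k j := by
  unfold Jint; congr 1; funext y; ring

lemma J_lt (j : ℕ) : ∀ k : ℕ, j < k → Jint j k = 0 := by
  induction j with
  | zero =>
    intro k hk
    obtain ⟨k', rfl⟩ : ∃ k', k = k' + 1 := ⟨k - 1, (Nat.succ_pred_eq_of_pos hk).symm⟩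
    exact J_zero_succ k'
  | succ n ih =>
    intro k hk
    obtain ⟨k', rfl⟩ : ∃ k', k = k' + 1 :=
      ⟨k - 1, (Nat.succ_pred_eq_of_pos (Nat.lt_of_lt_of_le (Nat.succ_pos n) hk.le)).symm⟩
    rw [J_succ_succ, ih k' (by omega), mul_zero]

lemma J_ne {j k : ℕ} (h : j ≠ k) : Jint j k = 0 := by
  rcases lt_or_gt_of_ne h with h' | h'
  · exact J_lt j k h'
  · rw [J_symm]; exact J_lt k j h'

end Stmt16Aux

namespace Stmt16Aux
open Real Asymptotics Set

def cst (k : ℕ) : ℝ := (Real.sqrt (2 ^ k * (Nat.factorial k : ℝ) * Real.sqrt Real.pi))⁻¹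

lemma hermiteFun_eq (k : ℕ) (y : ℝ) :
    hermiteFun k y = cst k * (Hp k).eval y * Real.exp (-(y ^ 2) / 2) := by
  unfold hermiteFun cst
  rw [physHermite_eq]

lemma hermiteFun_mul_eq (j k : ℕ) (y : ℝ) :
    hermiteFun j y * hermiteFun k y
      = (cst j * cst k) * ((Hp j).eval y * (Hp k).eval y * Real.exp (-y ^ 2)) := by
  rw [hermiteFun_eq, hermiteFun_eq]
  have he : Real.exp (-(y ^ 2) / 2) * Real.exp (-(y ^ 2) / 2) = Real.exp (-y ^ 2) := by
    rw [← Real.exp_add]; congr 1; ring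
  calc cst j * (Hp j).eval y * Real.exp (-(y ^ 2) / 2)
        * (cst k * (Hp k).eval y * Real.exp (-(y ^ 2) / 2))
      = (cst j * cst k) * ((Hp j).eval y * (Hp k).eval y
          * (Real.exp (-(y ^ 2) / 2) * Real.exp (-(y ^ 2) / 2))) := by ring
    _ = _ := by rw [he]

lemma integrable_hermiteFun_mul (j k : ℕ) :
    Integrable (fun y : ℝ => hermiteFun j y * hermiteFun k y) := by
  simp_rw [hermiteFun_mul_eq]
  exact (integrable_mul_gauss (Hp j) (Hp k)).const_mul _

lemma hermite_orth {j k : ℕ} (h : j ≠ k) : ∫ y : ℝ, hermiteFun j y * hermiteFun k y = 0 := by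
  simp_rw [hermiteFun_mul_eq]
  rw [integral_const_mul]
  have : ∫ y : ℝ, (Hp j).eval y * (Hp k).eval y * Real.exp (-y ^ 2) = Jint j k := rfl
  rw [this, J_ne h, mul_zero]

lemma cst_sq (k : ℕ) : cst k * cst k = (2 ^ k * (Nat.factorial k : ℝ) * Real.sqrt Real.pi)⁻¹ := by
  unfold cst
  rw [← mul_inv]
  congr 1
  exact Real.mul_self_sqrt (by positivity)

lemma hermite_norm_succ (k : ℕ) :
    ∫ y : ℝ, hermiteFun (k + 1) y * hermiteFun (k + 1) y
      = ∫ y : ℝ, hermiteFun k y * hermiteFun k y := by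
  simp_rw [hermiteFun_mul_eq]
  rw [integral_const_mul, integral_const_mul]
  have h1 : ∫ y : ℝ, (Hp (k+1)).eval y * (Hp (k+1)).eval y * Real.exp (-y ^ 2)
      = Jint (k+1) (k+1) := rfl
  have h2 : ∫ y : ℝ, (Hp k).eval y * (Hp k).eval y * Real.exp (-y ^ 2) = Jint k k := rfl
  rw [h1, h2, J_succ_succ, cst_sq, cst_sq]
  have hfac : (2 : ℝ) ^ (k+1) * (Nat.factorial (k+1) : ℝ) * Real.sqrt Real.pi
      = (2 * ((k:ℝ) + 1)) * (2 ^ k * (Nat.factorial k : ℝ) * Real.sqrt Real.pi) := by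
    rw [Nat.factorial_succ]
    push_cast
    ring
  rw [hfac, mul_inv]
  have hne : (2 * ((k:ℝ) + 1)) ≠ 0 := by positivity
  field_simp

end Stmt16Aux

namespace Stmt16Aux
open Real Asymptotics Set

lemma scaled_int {r : ℝ} (hr : 0 < r) (j k : ℕ) :
    ∫ y : ℝ, hermiteFun j (r * y) * hermiteFun k (r * y)
      = r⁻¹ * ∫ y : ℝ, hermiteFun j y * hermiteFun k y := by
  have h := MeasureTheory.Measure.integral_comp_mul_left
    (fun y : ℝ => hermiteFun j y * hermiteFun k y) r
  simpa [abs_of_pos (inv_pos.mpr hr), smul_eq_mul] using h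

lemma integrable_scaled {r : ℝ} (hr : 0 < r) (j k : ℕ) :
    Integrable (fun y : ℝ => hermiteFun j (r * y) * hermiteFun k (r * y)) :=
  (integrable_hermiteFun_mul j k).comp_mul_left' hr.ne'

lemma reduce2 {r : ℝ} (hr : 0 < r) (a b : ℝ) (j j' k k' : ℕ) :
    (∫ y : ℝ, (((a * (hermiteFun j (r * y) * hermiteFun j' (r * y))
        + b * (hermiteFun k (r * y) * hermiteFun k' (r * y))) : ℝ) : ℂ))
      = (((a * (r⁻¹ * ∫ y : ℝ, hermiteFun j y * hermiteFun j' y)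
        + b * (r⁻¹ * ∫ y : ℝ, hermiteFun k y * hermiteFun k' y)) : ℝ) : ℂ) := by
  have hco : (∫ y : ℝ, (((a * (hermiteFun j (r * y) * hermiteFun j' (r * y))
      + b * (hermiteFun k (r * y) * hermiteFun k' (r * y))) : ℝ) : ℂ))
      = (((∫ y : ℝ, (a * (hermiteFun j (r * y) * hermiteFun j' (r * y))
      + b * (hermiteFun k (r * y) * hermiteFun k' (r * y)))) : ℝ) : ℂ) := integral_ofReal
  rw [hco]
  congr 1
  rw [integral_add ((integrable_scaled hr j j').const_mul a)
    ((integrable_scaled hr k k').const_mul b), integral_const_mul, integral_const_mul,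
    scaled_int hr j j', scaled_int hr k k']

end Stmt16Aux

namespace Stmt16Aux
open Real Asymptotics Set

lemma lamE_neg {n : ℤ} (hn : n ≠ 0) (r σ : ℝ) : lamE r σ (-n) = - lamE r σ n := by
  unfold lamE
  rw [if_neg (neg_ne_zero.mpr hn), if_neg hn]
  push_cast [Int.sign_neg, abs_neg]
  ring

lemma lamE_sq {n : ℤ} (hn : n ≠ 0) (r σ : ℝ) :
    (lamE r σ n) ^ 2 = σ ^ 2 + 2 * |(n : ℝ)| * r ^ 2 := by
  unfold lamE
  rw [if_neg hn, mul_pow, Real.sq_sqrt (by positivity)]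
  have hs : ((Int.sign n : ℤ) : ℝ) ^ 2 = 1 := by
    rcases lt_or_gt_of_ne hn with h | h
    · rw [Int.sign_eq_neg_one_of_neg h]; norm_num
    · rw [Int.sign_eq_one_of_pos h]; norm_num
  rw [hs, one_mul]

lemma abs_cast_ge_one {n : ℤ} (hn : n ≠ 0) : (1 : ℝ) ≤ |(n : ℝ)| := by
  have h : (1 : ℤ) ≤ |n| := Int.one_le_abs (by omega)
  calc (1:ℝ) ≤ ((|n| : ℤ) : ℝ) := by exact_mod_cast h
    _ = |(n : ℝ)| := by push_cast; rfl

lemma c_mul_c {r σ : ℝ} (hr : 0 < r) {n : ℤ} (hn : n ≠ 0) :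
    (Real.sqrt (2 * |(n : ℝ)|) * r / (lamE r σ n + σ))
      * (Real.sqrt (2 * |((-n : ℤ) : ℝ)|) * r / (lamE r σ (-n) + σ)) = -1 := by
  rw [lamE_neg hn]
  have habs : |((-n : ℤ) : ℝ)| = |(n : ℝ)| := by push_cast; rw [abs_neg]
  rw [habs]
  set L := lamE r σ n with hLdef
  have hsq : Real.sqrt (2 * |(n : ℝ)|) * Real.sqrt (2 * |(n : ℝ)|) = 2 * |(n : ℝ)| :=
    Real.mul_self_sqrt (by positivity)
  have hL : L ^ 2 = σ ^ 2 + 2 * |(n : ℝ)| * r ^ 2 := lamE_sq hn r σ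
  have hone := abs_cast_ge_one hn
  have hprod : (L + σ) * (-L + σ) = -(2 * |(n : ℝ)| * r ^ 2) := by nlinarith [hL]
  have hx : (2 * |(n : ℝ)| * r ^ 2) ≠ 0 := by positivity
  rw [div_mul_div_comm]
  rw [show Real.sqrt (2 * |(n : ℝ)|) * r * (Real.sqrt (2 * |(n : ℝ)|) * r)
    = 2 * |(n : ℝ)| * r ^ 2 by rw [show Real.sqrt (2 * |(n : ℝ)|) * r
      * (Real.sqrt (2 * |(n : ℝ)|) * r) = Real.sqrt (2 * |(n : ℝ)|)
      * Real.sqrt (2 * |(n : ℝ)|) * r ^ 2 by ring, hsq]]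
  rw [hprod, div_neg, div_self hx]

end Stmt16Aux

/-- the family `(g_n)_{n∈ℤ}` is pairwise orthogonal in `L²(ℝ,ℂ²)`. -/
theorem stmt16 (r σ : ℝ) (hr : 0 < r) :
    ∀ n m : ℤ, n ≠ m →
      ∫ y : ℝ, ((gE r σ n y).1 * (starRingEnd ℂ) ((gE r σ m y).1)
        + (gE r σ n y).2 * (starRingEnd ℂ) ((gE r σ m y).2)) = 0 := by
  intro n m hnm
  by_cases hn : n = 0
  · subst hn
    have hm : m ≠ 0 := fun h => hnm h.symm
    have hfun : ∀ y : ℝ, ((gE r σ 0 y).1 * (starRingEnd ℂ) ((gE r σ m y).1)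
        + (gE r σ 0 y).2 * (starRingEnd ℂ) ((gE r σ m y).2))
        = ((((0 : ℝ) * (hermiteFun 1 (r * y) * hermiteFun 1 (r * y))
          + ((Real.sqrt r)⁻¹ * (alphaE r σ m * (Real.sqrt (2 * |(m : ℝ)|) * r
              / (lamE r σ m + σ))))
            * (hermiteFun 0 (r * y) * hermiteFun m.natAbs (r * y))) : ℝ) : ℂ) := by
      intro y
      simp [gE, hm, Complex.conj_ofReal]
      push_cast
      ring
    simp_rw [hfun]
    rw [Stmt16Aux.reduce2 hr _ _ 1 1 0 m.natAbs,
      Stmt16Aux.hermite_orth (Ne.symm (Int.natAbs_ne_zero.mpr hm))]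
    norm_num
  · by_cases hm : m = 0
    · subst hm
      have hfun : ∀ y : ℝ, ((gE r σ n y).1 * (starRingEnd ℂ) ((gE r σ 0 y).1)
          + (gE r σ n y).2 * (starRingEnd ℂ) ((gE r σ 0 y).2))
          = ((((0 : ℝ) * (hermiteFun 1 (r * y) * hermiteFun 1 (r * y))
            + ((alphaE r σ n * (Real.sqrt (2 * |(n : ℝ)|) * r / (lamE r σ n + σ)))
                * (Real.sqrt r)⁻¹)
              * (hermiteFun n.natAbs (r * y) * hermiteFun 0 (r * y))) : ℝ) : ℂ) := by
        intro y
        simp [gE, hn, Complex.conj_ofReal]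
        push_cast
        ring
      simp_rw [hfun]
      rw [Stmt16Aux.reduce2 hr _ _ 1 1 n.natAbs 0,
        Stmt16Aux.hermite_orth (Int.natAbs_ne_zero.mpr hn)]
      norm_num
    · by_cases hab : n.natAbs = m.natAbs
      · have hm_eq : m = -n := by
          rcases Int.natAbs_eq_natAbs_iff.mp hab with h | h
          · exact absurd h hnm
          · omega
        subst hm_eq
        have hKpos : 0 < n.natAbs := Int.natAbs_pos.mpr hn
        have hK1 : n.natAbs - 1 + 1 = n.natAbs := Nat.succ_pred_eq_of_pos hKpos
        have hfun : ∀ y : ℝ, ((gE r σ n y).1 * (starRingEnd ℂ) ((gE r σ (-n) y).1)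
            + (gE r σ n y).2 * (starRingEnd ℂ) ((gE r σ (-n) y).2))
            = ((((alphaE r σ n * alphaE r σ (-n))
                * (hermiteFun (n.natAbs - 1) (r * y) * hermiteFun (n.natAbs - 1) (r * y))
              + ((alphaE r σ n * (Real.sqrt (2 * |(n : ℝ)|) * r / (lamE r σ n + σ)))
                  * (alphaE r σ (-n) * (Real.sqrt (2 * |((-n : ℤ) : ℝ)|) * r
                    / (lamE r σ (-n) + σ))))
                * (hermiteFun n.natAbs (r * y) * hermiteFun n.natAbs (r * y))) : ℝ) : ℂ) := by
          intro y
          simp [gE, hn, neg_ne_zero.mpr hn, Complex.conj_ofReal, Int.natAbs_neg]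
          push_cast
          ring
        simp_rw [hfun]
        rw [Stmt16Aux.reduce2 hr _ _ (n.natAbs - 1) (n.natAbs - 1) n.natAbs n.natAbs]
        have hNorm : ∫ y : ℝ, hermiteFun n.natAbs y * hermiteFun n.natAbs y
            = ∫ y : ℝ, hermiteFun (n.natAbs - 1) y * hermiteFun (n.natAbs - 1) y := by
          conv_lhs => rw [← hK1]
          exact Stmt16Aux.hermite_norm_succ (n.natAbs - 1)
        rw [hNorm]
        rw [Complex.ofReal_eq_zero]
        have hcc := Stmt16Aux.c_mul_c (σ := σ) hr hn
        linear_combination (alphaE r σ n * alphaE r σ (-n)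
          * (r⁻¹ * ∫ y : ℝ, hermiteFun (n.natAbs - 1) y * hermiteFun (n.natAbs - 1) y)) * hcc
      · have h1 : n.natAbs - 1 ≠ m.natAbs - 1 := by
          have := Int.natAbs_pos.mpr hn
          have := Int.natAbs_pos.mpr hm
          omega
        have hfun : ∀ y : ℝ, ((gE r σ n y).1 * (starRingEnd ℂ) ((gE r σ m y).1)
            + (gE r σ n y).2 * (starRingEnd ℂ) ((gE r σ m y).2))
            = ((((alphaE r σ n * alphaE r σ m)
                * (hermiteFun (n.natAbs - 1) (r * y) * hermiteFun (m.natAbs - 1) (r * y))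
              + ((alphaE r σ n * (Real.sqrt (2 * |(n : ℝ)|) * r / (lamE r σ n + σ)))
                  * (alphaE r σ m * (Real.sqrt (2 * |(m : ℝ)|) * r / (lamE r σ m + σ))))
                * (hermiteFun n.natAbs (r * y) * hermiteFun m.natAbs (r * y))) : ℝ) : ℂ) := by
          intro y
          simp [gE, hn, hm, Complex.conj_ofReal]
          push_cast
          ring
        simp_rw [hfun]
        rw [Stmt16Aux.reduce2 hr _ _ (n.natAbs - 1) (m.natAbs - 1) n.natAbs m.natAbs,
          Stmt16Aux.hermite_orth h1, Stmt16Aux.hermite_orth hab]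
        norm_num
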